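/- Let f : ℝ^{n×m} → ℝ be continuous, λ > 0, μ > 0. If (Ū, V̄) ∈ ℝ^{n×r} × ℝ^{m×r} is a local minimizer of F_μ, then (Ū, V̄) is a local minimizer of Φ_{λ,μ}. -/
import Mathlib


open Filter Topology Matrix

/-- The Frobenius (trace) inner product `⟨A,B⟩ = trace(AᵀB) = ∑ᵢⱼ Aᵢⱼ Bᵢⱼ` on matrices. -/
noncomputable def frobInner {α β : Type*} [Fintype α] [Fintype β] (A B : Matrix α β ℝ) : ℝ :=
  ∑ i, ∑ j, A i j * B i j

/-- The column `ℓ_{2,0}`-norm: the number of nonzero columns. -/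
noncomputable def l20 {α β : Type*} [Fintype α] [Fintype β] (A : Matrix α β ℝ) : ℕ :=
  {j : β | (fun i => A i j) ≠ 0}.ncard

/-- `F_μ(U,V) = f(UVᵀ) + (μ/2)(‖U‖_F² + ‖V‖_F²)`. -/
noncomputable def Fmu {n m r : ℕ} (f : Matrix (Fin n) (Fin m) ℝ → ℝ) (mu : ℝ)
    (U : Matrix (Fin n) (Fin r) ℝ) (V : Matrix (Fin m) (Fin r) ℝ) : ℝ :=
  f (U * Vᵀ) + mu / 2 * (frobInner U U + frobInner V V)

/-- `Φ_{λ,μ}(U,V) = f(UVᵀ) + (μ/2)(‖U‖_F² + ‖V‖_F²) + λ(‖U‖_{2,0} + ‖V‖_{2,0})`. -/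
noncomputable def Phi {n m r : ℕ} (f : Matrix (Fin n) (Fin m) ℝ → ℝ) (lam mu : ℝ)
    (U : Matrix (Fin n) (Fin r) ℝ) (V : Matrix (Fin m) (Fin r) ℝ) : ℝ :=
  Fmu f mu U V + lam * ((l20 U : ℝ) + (l20 V : ℝ))

/-- The squared Frobenius norm of a pair: `‖(U,V)‖_F² = ‖U‖_F² + ‖V‖_F²`. -/
noncomputable def pairNormSq {n m r : ℕ}
    (U : Matrix (Fin n) (Fin r) ℝ) (V : Matrix (Fin m) (Fin r) ℝ) : ℝ :=
  frobInner U U + frobInner V V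

lemma frob_nonneg {α β : Type*} [Fintype α] [Fintype β] (A : Matrix α β ℝ) :
    0 ≤ frobInner A A := by
  refine Finset.sum_nonneg fun i _ => Finset.sum_nonneg fun j _ => mul_self_nonneg _

lemma entry_le_sqrt_frob {α β : Type*} [Fintype α] [Fintype β] (A : Matrix α β ℝ)
    (i : α) (j : β) : |A i j| ≤ Real.sqrt (frobInner A A) := by
  rw [show |A i j| = Real.sqrt (A i j * A i j) by
    rw [← Real.sqrt_mul_self (abs_nonneg _), abs_mul_abs_self]]
  apply Real.sqrt_le_sqrt
  unfold frobInner
  calc A i j * A i j ≤ ∑ j', A i j' * A i j' :=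
        Finset.single_le_sum (f := fun j' => A i j' * A i j') (fun j' _ => mul_self_nonneg _) (Finset.mem_univ j)
    _ ≤ ∑ i', ∑ j', A i' j' * A i' j' :=
        Finset.single_le_sum (f := fun i' => ∑ j', A i' j' * A i' j') (fun i' _ =>
          Finset.sum_nonneg fun j' _ => mul_self_nonneg _) (Finset.mem_univ i)

lemma l20_lsc {α β : Type*} [Fintype α] [Fintype β] (A : Matrix α β ℝ) :
    ∃ c > (0:ℝ), ∀ B : Matrix α β ℝ,
      Real.sqrt (frobInner (B - A) (B - A)) < c → l20 A ≤ l20 B := by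
  classical
  set S : Finset β := Finset.univ.filter (fun j => (fun i => A i j) ≠ 0) with hS
  have hpick : ∀ j ∈ S, ∃ i, A i j ≠ 0 := by
    intro j hj
    simp only [hS, Finset.mem_filter] at hj
    exact Function.ne_iff.mp hj.2
  choose pick hpickne using hpick
  set g : (j : β) → j ∈ S → ℝ := fun j hj => |A (pick j hj) j| with hg
  set T : Finset ℝ := insert (1:ℝ) (S.attach.image (fun j => g j.1 j.2)) with hT
  have hTne : T.Nonempty := ⟨1, Finset.mem_insert_self _ _⟩
  refine ⟨T.min' hTne, ?_, ?_⟩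
  · apply (Finset.lt_min'_iff T hTne).mpr
    intro y hy
    rcases Finset.mem_insert.mp hy with h | h
    · simp [h]
    · obtain ⟨j, _, rfl⟩ := Finset.mem_image.mp h
      exact abs_pos.mpr (hpickne _ _)
  · intro B hB
    have hsub : {j : β | (fun i => A i j) ≠ 0} ⊆ {j : β | (fun i => B i j) ≠ 0} := by
      intro j hj
      have hjS : j ∈ S := by simp [hS]; exact hj
      have hgT : g j hjS ∈ T :=
        Finset.mem_insert_of_mem (Finset.mem_image.mpr ⟨⟨j, hjS⟩, Finset.mem_attach _ _, rfl⟩)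
      have hmin : T.min' hTne ≤ g j hjS := Finset.min'_le _ _ hgT
      have hdiff : |B (pick j hjS) j - A (pick j hjS) j| < g j hjS := by
        calc |B (pick j hjS) j - A (pick j hjS) j|
            = |(B - A) (pick j hjS) j| := by simp [Matrix.sub_apply]
          _ ≤ Real.sqrt (frobInner (B - A) (B - A)) := entry_le_sqrt_frob _ _ _
          _ < T.min' hTne := hB
          _ ≤ g j hjS := hmin
      intro hzero
      have hB0 : B (pick j hjS) j = 0 := congrFun hzero (pick j hjS)
      rw [hB0, zero_sub, abs_neg, hg] at hdiff
      exact lt_irrefl _ hdiff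
    exact Set.ncard_le_ncard hsub (Set.toFinite _)

/-- if `(Ū,V̄)` is a local minimizer of `F_μ`, then it is a local
minimizer of `Φ_{λ,μ}`. -/
theorem local_min_Fmu_imp_Phi {n m r : ℕ}
    (f : Matrix (Fin n) (Fin m) ℝ → ℝ) (hf : Continuous f)
    (lam mu : ℝ) (hlam : 0 < lam) (hmu : 0 < mu)
    (Ubar : Matrix (Fin n) (Fin r) ℝ) (Vbar : Matrix (Fin m) (Fin r) ℝ)
    (hmin : ∃ δ > (0:ℝ), ∀ (U : Matrix (Fin n) (Fin r) ℝ) (V : Matrix (Fin m) (Fin r) ℝ),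
        Real.sqrt (pairNormSq (U - Ubar) (V - Vbar)) ≤ δ →
        Fmu f mu Ubar Vbar ≤ Fmu f mu U V) :
    ∃ ε > (0:ℝ), ∀ (U : Matrix (Fin n) (Fin r) ℝ) (V : Matrix (Fin m) (Fin r) ℝ),
        Real.sqrt (pairNormSq (U - Ubar) (V - Vbar)) ≤ ε →
        Phi f lam mu Ubar Vbar ≤ Phi f lam mu U V := by
  
  classical
  obtain ⟨δ, hδ, hF⟩ := hmin
  obtain ⟨c1, hc1, hU⟩ := l20_lsc Ubar
  obtain ⟨c2, hc2, hV⟩ := l20_lsc Vbar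
  refine ⟨min δ (min c1 c2 / 2), by positivity, ?_⟩
  intro U V h
  have hle : Real.sqrt (pairNormSq (U - Ubar) (V - Vbar)) ≤ δ :=
    h.trans (min_le_left _ _)
  have hhalf : min c1 c2 / 2 < min c1 c2 := half_lt_self (lt_min hc1 hc2)
  have hUfrob : frobInner (U - Ubar) (U - Ubar) ≤ pairNormSq (U - Ubar) (V - Vbar) := by
    have := frob_nonneg (V - Vbar); unfold pairNormSq; linarith
  have hVfrob : frobInner (V - Vbar) (V - Vbar) ≤ pairNormSq (U - Ubar) (V - Vbar) := by
    have := frob_nonneg (U - Ubar); unfold pairNormSq; linarith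
  have hlt1 : Real.sqrt (frobInner (U - Ubar) (U - Ubar)) < c1 :=
    lt_of_le_of_lt ((Real.sqrt_le_sqrt hUfrob).trans (h.trans (min_le_right _ _)))
      (hhalf.trans_le (min_le_left _ _))
  have hlt2 : Real.sqrt (frobInner (V - Vbar) (V - Vbar)) < c2 :=
    lt_of_le_of_lt ((Real.sqrt_le_sqrt hVfrob).trans (h.trans (min_le_right _ _)))
      (hhalf.trans_le (min_le_right _ _))
  have h1 : (l20 Ubar : ℝ) ≤ l20 U := Nat.cast_le.mpr (hU U hlt1)
  have h2 : (l20 Vbar : ℝ) ≤ l20 V := Nat.cast_le.mpr (hV V hlt2)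
  unfold Phi
  have hFle := hF U V hle
  have := mul_le_mul_of_nonneg_left (add_le_add h1 h2) hlam.le
  linarith
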